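/- Let g = X - X² + X³ be a formal power series over ℚ and let f be the formal power series over ℚ with zero constant coefficient such that substituting f into g yields the identity series X. Then the coefficients of f at X¹ through X⁹ are, respectively: 1, 1, 1, 0, -4, -14, -30, -33, 55. In particular f has negative coefficients. -/

import Mathlib

open PowerSeries

/-- Let `g = X - X² + X³` over `ℚ` and let `f` be a power series with zero
constant coefficient such that substituting `f` into `g` (which gives `f - f² + f³`)
yields `X`.  Then the coefficients of `f` at `X¹,…,X⁹` are `1, 1, 1, 0, -4, -14, -30,
-33, 55`; in particular `f` has negative coefficients. -/
theorem stmt_5 (f : PowerSeries ℚ) (hf0 : PowerSeries.constantCoeff (R := ℚ) f = 0)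
    (hinv : f - f ^ 2 + f ^ 3 = PowerSeries.X) :
    PowerSeries.coeff (R := ℚ) 1 f = 1 ∧
    PowerSeries.coeff (R := ℚ) 2 f = 1 ∧
    PowerSeries.coeff (R := ℚ) 3 f = 1 ∧
    PowerSeries.coeff (R := ℚ) 4 f = 0 ∧
    PowerSeries.coeff (R := ℚ) 5 f = -4 ∧
    PowerSeries.coeff (R := ℚ) 6 f = -14 ∧
    PowerSeries.coeff (R := ℚ) 7 f = -30 ∧
    PowerSeries.coeff (R := ℚ) 8 f = -33 ∧
    PowerSeries.coeff (R := ℚ) 9 f = 55 ∧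
    ∃ k : ℕ, PowerSeries.coeff (R := ℚ) k f < 0 := by
  have h0 : coeff (R := ℚ) 0 f = 0 := by simpa using hf0
  have c1 : coeff (R := ℚ) 1 f = 1 := by
    have h := congrArg (coeff (R := ℚ) 1) hinv
    simp [pow_succ, coeff_mul, Finset.Nat.sum_antidiagonal_eq_sum_range_succ_mk,
      Finset.sum_range_succ, PowerSeries.coeff_X, h0] at h
    linarith
  have c2 : coeff (R := ℚ) 2 f = 1 := by
    have h := congrArg (coeff (R := ℚ) 2) hinv
    simp [pow_succ, coeff_mul, Finset.Nat.sum_antidiagonal_eq_sum_range_succ_mk,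
      Finset.sum_range_succ, PowerSeries.coeff_X, h0, c1] at h
    linarith
  have c3 : coeff (R := ℚ) 3 f = 1 := by
    have h := congrArg (coeff (R := ℚ) 3) hinv
    simp [pow_succ, coeff_mul, Finset.Nat.sum_antidiagonal_eq_sum_range_succ_mk,
      Finset.sum_range_succ, PowerSeries.coeff_X, h0, c1, c2] at h
    linarith
  have c4 : coeff (R := ℚ) 4 f = 0 := by
    have h := congrArg (coeff (R := ℚ) 4) hinv
    simp [pow_succ, coeff_mul, Finset.Nat.sum_antidiagonal_eq_sum_range_succ_mk,
      Finset.sum_range_succ, PowerSeries.coeff_X, h0, c1, c2, c3] at h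
    linarith
  have c5 : coeff (R := ℚ) 5 f = -4 := by
    have h := congrArg (coeff (R := ℚ) 5) hinv
    simp [pow_succ, coeff_mul, Finset.Nat.sum_antidiagonal_eq_sum_range_succ_mk,
      Finset.sum_range_succ, PowerSeries.coeff_X, h0, c1, c2, c3, c4] at h
    linarith
  have c6 : coeff (R := ℚ) 6 f = -14 := by
    have h := congrArg (coeff (R := ℚ) 6) hinv
    simp [pow_succ, coeff_mul, Finset.Nat.sum_antidiagonal_eq_sum_range_succ_mk,
      Finset.sum_range_succ, PowerSeries.coeff_X, h0, c1, c2, c3, c4, c5] at h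
    linarith
  have c7 : coeff (R := ℚ) 7 f = -30 := by
    have h := congrArg (coeff (R := ℚ) 7) hinv
    simp [pow_succ, coeff_mul, Finset.Nat.sum_antidiagonal_eq_sum_range_succ_mk,
      Finset.sum_range_succ, PowerSeries.coeff_X, h0, c1, c2, c3, c4, c5, c6] at h
    linarith
  have c8 : coeff (R := ℚ) 8 f = -33 := by
    have h := congrArg (coeff (R := ℚ) 8) hinv
    simp [pow_succ, coeff_mul, Finset.Nat.sum_antidiagonal_eq_sum_range_succ_mk,
      Finset.sum_range_succ, PowerSeries.coeff_X, h0, c1, c2, c3, c4, c5, c6, c7] at h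
    linarith
  have c9 : coeff (R := ℚ) 9 f = 55 := by
    have h := congrArg (coeff (R := ℚ) 9) hinv
    simp [pow_succ, coeff_mul, Finset.Nat.sum_antidiagonal_eq_sum_range_succ_mk,
      Finset.sum_range_succ, PowerSeries.coeff_X, h0, c1, c2, c3, c4, c5, c6, c7, c8] at h
    linarith
  exact ⟨c1, c2, c3, c4, c5, c6, c7, c8, c9, 5, by rw [c5]; norm_num⟩
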